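/- In a two-player zero-sum game with payoff matrix A ∈ ℝ^{m_x × m_y}, if the x-player plays strategies x_1,…,x_T ∈ Δ_{m_x} and the y-player plays y_1,…,y_T ∈ Δ_{m_y}, and the total regret is R = max_{x*∈Δ_{m_x}} Σ_t ⟨x* − x_t, A y_t⟩ + max_{y*∈Δ_{m_y}} Σ_t ⟨y_t − y*, Aᵀ x_t⟩, then the average strategies x̄ = (1/T)Σ_t x_t and ȳ = (1/T)Σ_t y_t form an (R/T)-approximate Nash equilibrium: for all x ∈ Δ_{m_x} and y ∈ Δ_{m_y}, xᵀ A ȳ − R/T ≤ x̄ᵀ A ȳ and x̄ᵀ A ȳ ≤ x̄ᵀ A y + R/T. -/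

import Mathlib

/-- Regret-to-Nash conversion (Freund–Schapire). If the players' external regrets are
bounded by `Rx` and `Ry` respectively, then the average strategies form an
`((Rx + Ry)/T)`-approximate Nash equilibrium of the zero-sum game with payoff matrix `A`. -/
theorem stmt_9 (T mx my : ℕ) (hT : 0 < T)
    (A : Matrix (Fin mx) (Fin my) ℝ)
    (x : ℕ → Fin mx → ℝ) (y : ℕ → Fin my → ℝ)
    (hx : ∀ t ∈ Finset.Icc 1 T, (∀ i, 0 ≤ x t i) ∧ ∑ i, x t i = 1)
    (hy : ∀ t ∈ Finset.Icc 1 T, (∀ j, 0 ≤ y t j) ∧ ∑ j, y t j = 1)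
    (Rx Ry : ℝ)
    (hRx : ∀ xs : Fin mx → ℝ, (∀ i, 0 ≤ xs i) → ∑ i, xs i = 1 →
      ∑ t ∈ Finset.Icc 1 T, ∑ i, (xs i - x t i) * (∑ j, A i j * y t j) ≤ Rx)
    (hRy : ∀ ys : Fin my → ℝ, (∀ j, 0 ≤ ys j) → ∑ j, ys j = 1 →
      ∑ t ∈ Finset.Icc 1 T, ∑ j, (y t j - ys j) * (∑ i, A i j * x t i) ≤ Ry)
    (xbar : Fin mx → ℝ) (hxbar : ∀ i, xbar i = (∑ t ∈ Finset.Icc 1 T, x t i) / T)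
    (ybar : Fin my → ℝ) (hybar : ∀ j, ybar j = (∑ t ∈ Finset.Icc 1 T, y t j) / T) :
    ∀ xs : Fin mx → ℝ, (∀ i, 0 ≤ xs i) → ∑ i, xs i = 1 →
    ∀ ys : Fin my → ℝ, (∀ j, 0 ≤ ys j) → ∑ j, ys j = 1 →
      (∑ i, ∑ j, xs i * A i j * ybar j) - (Rx + Ry) / T
        ≤ ∑ i, ∑ j, xbar i * A i j * ybar j ∧
      ∑ i, ∑ j, xbar i * A i j * ybar j
        ≤ (∑ i, ∑ j, xbar i * A i j * ys j) + (Rx + Ry) / T := by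
  intro xs hxs1 hxs2 ys hys1 hys2
  have hT' : (T : ℝ) ≠ 0 := Nat.cast_ne_zero.mpr hT.ne'
  have hTpos : (0 : ℝ) < T := Nat.cast_pos.mpr hT
  set Icc := Finset.Icc 1 T with hIcc
  have hcard : (Icc.card : ℝ) = T := by
    simp [hIcc, Nat.card_Icc]
  have hxbar1 : ∀ i, 0 ≤ xbar i := by
    intro i; rw [hxbar]
    exact div_nonneg (Finset.sum_nonneg fun t ht => (hx t ht).1 i) hTpos.le
  have hxbar2 : ∑ i, xbar i = 1 := by
    simp only [hxbar]
    rw [← Finset.sum_div, Finset.sum_comm]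
    rw [Finset.sum_congr rfl fun t ht => (hx t ht).2]
    simp [hcard, hT']
  have hybar1 : ∀ j, 0 ≤ ybar j := by
    intro j; rw [hybar]
    exact div_nonneg (Finset.sum_nonneg fun t ht => (hy t ht).1 j) hTpos.le
  have hybar2 : ∑ j, ybar j = 1 := by
    simp only [hybar]
    rw [← Finset.sum_div, Finset.sum_comm]
    rw [Finset.sum_congr rfl fun t ht => (hy t ht).2]
    simp [hcard, hT']
  set S := ∑ t ∈ Icc, ∑ i, ∑ j, x t i * A i j * y t j with hS
  -- key identity 1
  have key1 : ∀ zs : Fin mx → ℝ,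
      (T : ℝ) * ∑ i, ∑ j, zs i * A i j * ybar j
        = ∑ t ∈ Icc, ∑ i, zs i * (∑ j, A i j * y t j) := by
    intro zs
    have h1 : ∀ i j, zs i * A i j * ybar j
        = (∑ t ∈ Icc, zs i * A i j * y t j) / T := by
      intro i j
      rw [hybar, ← mul_div_assoc, Finset.mul_sum]
    simp only [h1, ← Finset.sum_div]
    rw [mul_div_cancel₀ _ hT']
    have swap : (∑ i, ∑ j, ∑ t ∈ Icc, zs i * A i j * y t j)
        = ∑ t ∈ Icc, ∑ i, ∑ j, zs i * A i j * y t j := by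
      rw [show (∑ i, ∑ j, ∑ t ∈ Icc, zs i * A i j * y t j)
          = ∑ i, ∑ t ∈ Icc, ∑ j, zs i * A i j * y t j from
        Finset.sum_congr rfl fun i _ => Finset.sum_comm, Finset.sum_comm]
    rw [swap]
    refine Finset.sum_congr rfl fun t _ => Finset.sum_congr rfl fun i _ => ?_
    rw [Finset.mul_sum]
    exact Finset.sum_congr rfl fun j _ => by ring
  -- key identity 2
  have key2 : ∀ zs : Fin my → ℝ,
      (T : ℝ) * ∑ i, ∑ j, xbar i * A i j * zs j
        = ∑ t ∈ Icc, ∑ j, zs j * (∑ i, A i j * x t i) := by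
    intro zs
    have h1 : ∀ i j, xbar i * A i j * zs j
        = (∑ t ∈ Icc, zs j * (A i j * x t i)) / T := by
      intro i j
      rw [hxbar, ← Finset.mul_sum, ← Finset.mul_sum]
      field_simp
    simp only [h1, ← Finset.sum_div]
    rw [mul_div_cancel₀ _ hT']
    have swap : (∑ i, ∑ j, ∑ t ∈ Icc, zs j * (A i j * x t i))
        = ∑ t ∈ Icc, ∑ i, ∑ j, zs j * (A i j * x t i) := by
      rw [show (∑ i, ∑ j, ∑ t ∈ Icc, zs j * (A i j * x t i))
          = ∑ i, ∑ t ∈ Icc, ∑ j, zs j * (A i j * x t i) from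
        Finset.sum_congr rfl fun i _ => Finset.sum_comm, Finset.sum_comm]
    rw [swap]
    refine Finset.sum_congr rfl fun t _ => ?_
    rw [Finset.sum_comm]
    refine Finset.sum_congr rfl fun j _ => ?_
    rw [Finset.mul_sum]
  -- regret bound 1
  have bnd1 : ∀ zs : Fin mx → ℝ, (∀ i, 0 ≤ zs i) → ∑ i, zs i = 1 →
      (T : ℝ) * ∑ i, ∑ j, zs i * A i j * ybar j ≤ S + Rx := by
    intro zs h1 h2
    have h := hRx zs h1 h2
    rw [key1]
    have hsplit : ∑ t ∈ Icc, ∑ i, (zs i - x t i) * (∑ j, A i j * y t j)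
        = (∑ t ∈ Icc, ∑ i, zs i * (∑ j, A i j * y t j)) - S := by
      rw [hS, ← Finset.sum_sub_distrib]
      refine Finset.sum_congr rfl fun t _ => ?_
      rw [← Finset.sum_sub_distrib]
      refine Finset.sum_congr rfl fun i _ => ?_
      have hmul : x t i * (∑ j, A i j * y t j) = ∑ j, x t i * A i j * y t j := by
        rw [Finset.mul_sum]
        exact Finset.sum_congr rfl fun j _ => by ring
      rw [sub_mul, hmul]
    rw [hsplit] at h
    linarith
  -- regret bound 2
  have bnd2 : ∀ zs : Fin my → ℝ, (∀ j, 0 ≤ zs j) → ∑ j, zs j = 1 →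
      S - Ry ≤ (T : ℝ) * ∑ i, ∑ j, xbar i * A i j * zs j := by
    intro zs h1 h2
    have h := hRy zs h1 h2
    rw [key2]
    have hSalt : S = ∑ t ∈ Icc, ∑ j, y t j * (∑ i, A i j * x t i) := by
      rw [hS]
      refine Finset.sum_congr rfl fun t _ => ?_
      rw [Finset.sum_comm]
      refine Finset.sum_congr rfl fun j _ => ?_
      rw [Finset.mul_sum]
      exact Finset.sum_congr rfl fun i _ => by ring
    have hsplit : ∑ t ∈ Icc, ∑ j, (y t j - zs j) * (∑ i, A i j * x t i)
        = S - ∑ t ∈ Icc, ∑ j, zs j * (∑ i, A i j * x t i) := by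
      rw [hSalt, ← Finset.sum_sub_distrib]
      refine Finset.sum_congr rfl fun t _ => ?_
      rw [← Finset.sum_sub_distrib]
      exact Finset.sum_congr rfl fun j _ => by ring
    rw [hsplit] at h
    linarith
  have b1 := bnd1 xs hxs1 hxs2
  have b2 := bnd2 ybar hybar1 hybar2
  have b3 := bnd1 xbar hxbar1 hxbar2
  have b4 := bnd2 ys hys1 hys2
  constructor
  · rw [sub_le_iff_le_add, ← mul_le_mul_iff_right₀ hTpos, mul_add, mul_div_cancel₀ _ hT']
    linarith
  · rw [← mul_le_mul_iff_right₀ hTpos, mul_add, mul_div_cancel₀ _ hT']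
    linarith
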